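/- Let q be a prime and R a commutative ring with unity. For any M ∈ Mₙ(R) with n ≥ 2, trace(M^q) ≡ (trace M)^q modulo q·R. -/

import Mathlib

open Polynomial Matrix

section CharPLemma

variable {m : ℕ} {S : Type*} [CommRing S] (p : ℕ) [Fact p.Prime] [CharP S p]

private theorem matPolyEquiv_eq_X_pow_sub_C' (k : ℕ) (N : Matrix (Fin m) (Fin m) S) :
    matPolyEquiv ((expand S k : S[X] →+* S[X]).mapMatrix (charmatrix (N ^ k))) =
      X ^ k - C (N ^ k) := by
  ext i j l
  rw [coeff_sub, coeff_C, matPolyEquiv_coeff_apply, RingHom.mapMatrix_apply, Matrix.map_apply,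
    AlgHom.coe_toRingHom, Matrix.sub_apply, coeff_X_pow]
  by_cases hij : j = l
  · rw [hij, charmatrix_apply_eq, map_sub, expand_C, expand_X, coeff_sub, coeff_X_pow, coeff_C]
    split_ifs with mp m0 <;> simp only [Matrix.one_apply_eq, Matrix.zero_apply]
  · rw [charmatrix_apply_ne _ _ _ hij, map_neg, expand_C, coeff_neg, coeff_C]
    split_ifs with m0 mp <;>
      simp only [hij, zero_sub, Matrix.zero_apply, sub_zero, neg_zero, Matrix.one_apply_ne, Ne,
        not_false_iff]

theorem charpoly_pow_char' [Nonempty (Fin m)] (N : Matrix (Fin m) (Fin m) S) :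
    (N ^ p).charpoly = (N.charpoly).map (frobenius S p) := by
  have hp : 0 < p := (Fact.out : p.Prime).pos
  apply expand_injective hp
  have h1 : matPolyEquiv ((expand S p : S[X] →+* S[X]).mapMatrix (charmatrix (N ^ p))) =
      X ^ p - C (N ^ p) := matPolyEquiv_eq_X_pow_sub_C' p N
  have h2 : matPolyEquiv ((charmatrix N) ^ p) = X ^ p - C (N ^ p) := by
    rw [map_pow, matPolyEquiv_charmatrix, sub_pow_char_of_commute _ (commute_X (C N)),
      ← map_pow]
  have h3 : (expand S p : S[X] →+* S[X]).mapMatrix (charmatrix (N ^ p)) = (charmatrix N) ^ p :=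
    matPolyEquiv.injective (h1.trans h2.symm)
  have h4 := congr_arg Matrix.det h3
  rw [← RingHom.map_det, Matrix.det_pow] at h4
  calc expand S p ((N ^ p).charpoly) = (N.charpoly) ^ p := h4
    _ = expand S p ((N.charpoly).map (frobenius S p)) := by
        rw [← map_expand, map_frobenius_expand]

theorem trace_pow_char' [Nonempty (Fin m)] (N : Matrix (Fin m) (Fin m) S) :
    Matrix.trace (N ^ p) = (Matrix.trace N) ^ p := by
  rw [trace_eq_neg_charpoly_coeff, trace_eq_neg_charpoly_coeff, charpoly_pow_char',
    Polynomial.coeff_map, frobenius_def, neg_pow, neg_one_pow_char S p, neg_one_mul]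

end CharPLemma

theorem trace_pow_prime_congr (R : Type*) [CommRing R] (q n : ℕ) (hq : q.Prime) (hn : 2 ≤ n)
    (M : Matrix (Fin n) (Fin n) R) :
    Matrix.trace (M ^ q) - (Matrix.trace M) ^ q ∈ Ideal.span {(q : R)} := by
  haveI : Fact q.Prime := ⟨hq⟩
  have hne : Nonempty (Fin n) := ⟨⟨0, by omega⟩⟩
  set I : Ideal R := Ideal.span {(q : R)}
  let S := R ⧸ I
  rw [← Ideal.Quotient.eq_zero_iff_mem]
  have hq0 : (q : S) = 0 := by
    rw [← map_natCast (Ideal.Quotient.mk I)]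
    exact Ideal.Quotient.eq_zero_iff_mem.mpr (Ideal.subset_span rfl)
  have key : ∀ (N : Matrix (Fin n) (Fin n) S), Matrix.trace (N ^ q) = (Matrix.trace N) ^ q := by
    intro N
    cases subsingleton_or_nontrivial S with
    | inl h => exact Subsingleton.elim _ _
    | inr h =>
      have hdvd : ringChar S ∣ q := ringChar.dvd hq0
      have : ringChar S = q := by
        rcases (Nat.Prime.eq_one_or_self_of_dvd hq _ hdvd) with h1 | h1
        · exact absurd h1 (CharP.ringChar_ne_one)
        · exact h1
      haveI : CharP S q := this ▸ ringChar.charP S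
      exact trace_pow_char' q N
  have hmap : ∀ (A : Matrix (Fin n) (Fin n) R),
      Ideal.Quotient.mk I (Matrix.trace A) = Matrix.trace (A.map (Ideal.Quotient.mk I)) := by
    intro A
    simp [Matrix.trace, Matrix.map_apply]
  have hpow : (M ^ q).map (Ideal.Quotient.mk I) = (M.map (Ideal.Quotient.mk I)) ^ q := by
    simpa using map_pow ((Ideal.Quotient.mk I).mapMatrix) M q
  rw [map_sub, map_pow, hmap, hmap, hpow, key]
  ring
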